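/- Let σ ∈ (0, π) and γ = cos(σ/2) ∈ (0,1). Then min over t ∈ [0, 2π) of ∫_{−t}^{π−t} [(1/4)·1[cos θ ≤ γ] + (7/4)·1[−cos(θ+σ) ≤ γ]] dθ equals 2π − 2σ, and the minimum is attained at t = σ/2. -/

import Mathlib

open MeasureTheory Real Set

lemma cos_lt_iff' (σ x : ℝ) (h1 : 0 < σ) (h2 : σ < Real.pi) (hx : |x| ≤ Real.pi) :
    Real.cos (σ/2) < Real.cos x ↔ |x| < σ/2 := by
  rw [← Real.cos_abs x]
  exact Real.strictAntiOn_cos.lt_iff_gt ⟨by linarith, by linarith⟩ ⟨abs_nonneg x, hx⟩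

lemma intble' {P : ℝ → Prop} [DecidablePred P] (hP : MeasurableSet {θ | P θ}) (a b : ℝ) :
    IntervalIntegrable (fun θ => if P θ then (1:ℝ) else 0) volume a b := by
  rw [intervalIntegrable_iff]
  haveI : Fact (volume (Set.uIoc a b) < ⊤) := ⟨by rw [Set.uIoc]; exact measure_Ioc_lt_top⟩
  apply Integrable.mono' (integrable_const (1:ℝ))
  · exact (Measurable.ite hP measurable_const measurable_const).aestronglyMeasurable
  · filter_upwards with θ
    by_cases h : P θ <;> simp [h]

lemma integ' {P : ℝ → Prop} [DecidablePred P] (hP : MeasurableSet {θ | P θ}) (a b : ℝ) (hab : a ≤ b) :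
    ∫ θ in a..b, (if P θ then (1:ℝ) else 0) = (volume ({θ | P θ} ∩ Set.Ioc a b)).toReal := by
  rw [intervalIntegral.integral_of_le hab]
  have h1 : ∀ θ, (if P θ then (1:ℝ) else 0) = Set.indicator {θ | P θ} (fun _ => (1:ℝ)) θ := by
    intro θ; by_cases h : P θ <;> simp [h]
  simp_rw [h1]
  rw [MeasureTheory.setIntegral_indicator hP, MeasureTheory.setIntegral_const, Set.inter_comm]
  simp
  rfl

lemma voltoReal (c d : ℝ) (hcd : c ≤ d) (A : Set ℝ) (hA : MeasurableSet A) :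
    (volume (A ∩ Set.Ioc c d)).toReal = (d - c) - (volume (Aᶜ ∩ Set.Ioc c d)).toReal := by
  have h := MeasureTheory.measure_inter_add_diff (μ := volume) (Set.Ioc c d) hA
  have hd : Set.Ioc c d \ A = Aᶜ ∩ Set.Ioc c d := by rw [Set.diff_eq, Set.inter_comm]
  rw [hd, Set.inter_comm (Set.Ioc c d) A, Real.volume_Ioc] at h
  have h1 : volume (A ∩ Set.Ioc c d) ≠ ⊤ :=
    ne_of_lt (lt_of_le_of_lt (measure_mono Set.inter_subset_right)
      (by rw [Real.volume_Ioc]; exact ENNReal.ofReal_lt_top))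
  have h2 : volume (Aᶜ ∩ Set.Ioc c d) ≠ ⊤ :=
    ne_of_lt (lt_of_le_of_lt (measure_mono Set.inter_subset_right)
      (by rw [Real.volume_Ioc]; exact ENNReal.ofReal_lt_top))
  have h3 := congrArg ENNReal.toReal h
  rw [ENNReal.toReal_add h1 h2, ENNReal.toReal_ofReal (by linarith)] at h3
  linarith

lemma keyB (σ θ : ℝ) : -Real.cos (θ + σ) = Real.cos (Real.pi - σ - θ) := by
  rw [show Real.pi - σ - θ = Real.pi - (θ + σ) by ring, Real.cos_pi_sub]

lemma setA1 (σ γ : ℝ) (hσ1 : 0 < σ) (hσ2 : σ < Real.pi) (hγ : γ = Real.cos (σ/2)) :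
    {θ : ℝ | γ < Real.cos θ} ∩ Set.Ioc (-(σ/2)) (Real.pi - σ/2) = Set.Ioo (-(σ/2)) (σ/2) := by
  have hpi := Real.pi_pos
  ext θ
  simp only [Set.mem_inter_iff, Set.mem_setOf_eq, Set.mem_Ioc, Set.mem_Ioo]
  constructor
  · rintro ⟨hc, h1, h2⟩
    have habs : |θ| ≤ Real.pi := abs_le.2 ⟨by linarith, by linarith⟩
    exact abs_lt.1 ((cos_lt_iff' σ θ hσ1 hσ2 habs).1 (hγ ▸ hc))
  · rintro ⟨h1, h2⟩
    refine ⟨hγ ▸ (cos_lt_iff' σ θ hσ1 hσ2 (abs_le.2 ⟨by linarith, by linarith⟩)).2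
      (abs_lt.2 ⟨h1, h2⟩), h1, by linarith⟩

lemma setB1 (σ γ : ℝ) (hσ1 : 0 < σ) (hσ2 : σ < Real.pi) (hγ : γ = Real.cos (σ/2)) :
    {θ : ℝ | γ < -Real.cos (θ + σ)} ∩ Set.Ioc (-(σ/2)) (Real.pi - σ/2)
      = Set.Ioo (Real.pi - 3*σ/2) (Real.pi - σ/2) := by
  have hpi := Real.pi_pos
  ext θ
  simp only [Set.mem_inter_iff, Set.mem_setOf_eq, Set.mem_Ioc, Set.mem_Ioo, keyB]
  constructor
  · rintro ⟨hc, h1, h2⟩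
    have habs : |Real.pi - σ - θ| ≤ Real.pi := abs_le.2 ⟨by linarith, by linarith⟩
    have h3 := abs_lt.1 ((cos_lt_iff' σ _ hσ1 hσ2 habs).1 (hγ ▸ hc))
    constructor <;> [linarith [h3.2]; linarith [h3.1]]
  · rintro ⟨h1, h2⟩
    refine ⟨hγ ▸ (cos_lt_iff' σ _ hσ1 hσ2 (abs_le.2 ⟨by linarith, by linarith⟩)).2
      (abs_lt.2 ⟨by linarith, by linarith⟩), by linarith, by linarith⟩

lemma subA1 (σ γ t : ℝ) (hσ1 : 0 < σ) (hσ2 : σ < Real.pi) (hγ : γ = Real.cos (σ/2))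
    (ht1 : 0 ≤ t) (ht2 : t ≤ 2*Real.pi - σ/2) :
    {θ : ℝ | γ < Real.cos θ} ∩ Set.Ioc (-t) (Real.pi - t)
      ⊆ Set.Ioo (-(σ/2)) (-(σ/2) + σ) := by
  have hpi := Real.pi_pos
  rintro θ ⟨hc, h1, h2⟩
  simp only [Set.mem_setOf_eq] at hc
  rcases le_or_gt (-Real.pi) θ with hθ | hθ
  · have habs : |θ| ≤ Real.pi := abs_le.2 ⟨hθ, by linarith⟩
    have h3 := abs_lt.1 ((cos_lt_iff' σ θ hσ1 hσ2 habs).1 (hγ ▸ hc))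
    exact ⟨h3.1, by linarith [h3.2]⟩
  · exfalso
    have hc' : γ < Real.cos (θ + 2*Real.pi) := by rwa [Real.cos_add_two_pi]
    have habs : |θ + 2*Real.pi| ≤ Real.pi := abs_le.2 ⟨by linarith, by linarith⟩
    have h3 := abs_lt.1 ((cos_lt_iff' σ _ hσ1 hσ2 habs).1 (hγ ▸ hc'))
    linarith [h3.2]

lemma subA2 (σ γ t : ℝ) (hσ1 : 0 < σ) (hσ2 : σ < Real.pi) (hγ : γ = Real.cos (σ/2))
    (ht1 : 2*Real.pi - σ/2 < t) (ht2 : t < 2*Real.pi) :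
    {θ : ℝ | γ < Real.cos θ} ∩ Set.Ioc (-t) (Real.pi - t)
      ⊆ Set.Ioo (-(2*Real.pi)) (-(2*Real.pi) + σ) := by
  have hpi := Real.pi_pos
  rintro θ ⟨hc, h1, h2⟩
  simp only [Set.mem_setOf_eq] at hc
  rcases le_or_gt (-Real.pi) θ with hθ | hθ
  · exfalso
    have habs : |θ| ≤ Real.pi := abs_le.2 ⟨hθ, by linarith⟩
    have h3 := abs_lt.1 ((cos_lt_iff' σ θ hσ1 hσ2 habs).1 (hγ ▸ hc))
    linarith [h3.1]
  · have hc' : γ < Real.cos (θ + 2*Real.pi) := by rwa [Real.cos_add_two_pi]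
    have habs : |θ + 2*Real.pi| ≤ Real.pi := abs_le.2 ⟨by linarith, by linarith⟩
    have h3 := abs_lt.1 ((cos_lt_iff' σ _ hσ1 hσ2 habs).1 (hγ ▸ hc'))
    exact ⟨by linarith, by linarith [h3.2]⟩

lemma subB1 (σ γ t : ℝ) (hσ1 : 0 < σ) (hσ2 : σ < Real.pi) (hγ : γ = Real.cos (σ/2))
    (ht1 : 0 ≤ t) (ht2 : t ≤ Real.pi + σ/2) :
    {θ : ℝ | γ < -Real.cos (θ + σ)} ∩ Set.Ioc (-t) (Real.pi - t)
      ⊆ Set.Ioo (Real.pi - 3*σ/2) (Real.pi - 3*σ/2 + σ) := by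
  have hpi := Real.pi_pos
  rintro θ ⟨hc, h1, h2⟩
  simp only [Set.mem_setOf_eq, keyB] at hc
  rcases le_or_gt (Real.pi - σ - θ) Real.pi with hθ | hθ
  · have habs : |Real.pi - σ - θ| ≤ Real.pi := abs_le.2 ⟨by linarith, hθ⟩
    have h3 := abs_lt.1 ((cos_lt_iff' σ _ hσ1 hσ2 habs).1 (hγ ▸ hc))
    constructor <;> [linarith [h3.2]; linarith [h3.1]]
  · exfalso
    have hc' : γ < Real.cos (Real.pi - σ - θ - 2*Real.pi) := by rwa [Real.cos_sub_two_pi]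
    have habs : |Real.pi - σ - θ - 2*Real.pi| ≤ Real.pi := abs_le.2 ⟨by linarith, by linarith⟩
    have h3 := abs_lt.1 ((cos_lt_iff' σ _ hσ1 hσ2 habs).1 (hγ ▸ hc'))
    linarith [h3.1]

lemma subB2 (σ γ t : ℝ) (hσ1 : 0 < σ) (hσ2 : σ < Real.pi) (hγ : γ = Real.cos (σ/2))
    (ht1 : Real.pi + σ/2 < t) (ht2 : t < 2*Real.pi) :
    {θ : ℝ | γ < -Real.cos (θ + σ)} ∩ Set.Ioc (-t) (Real.pi - t)
      ⊆ Set.Ioo (-Real.pi - 3*σ/2) (-Real.pi - 3*σ/2 + σ) := by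
  have hpi := Real.pi_pos
  rintro θ ⟨hc, h1, h2⟩
  simp only [Set.mem_setOf_eq, keyB] at hc
  rcases le_or_gt (-Real.pi) (Real.pi - σ - θ - 2*Real.pi) with hθ | hθ
  · have habs : |Real.pi - σ - θ - 2*Real.pi| ≤ Real.pi := abs_le.2 ⟨hθ, by linarith⟩
    have hc' : γ < Real.cos (Real.pi - σ - θ - 2*Real.pi) := by rwa [Real.cos_sub_two_pi]
    have h3 := abs_lt.1 ((cos_lt_iff' σ _ hσ1 hσ2 habs).1 (hγ ▸ hc'))
    constructor <;> [linarith [h3.2]; linarith [h3.1]]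
  · exfalso
    have habs : |Real.pi - σ - θ| ≤ Real.pi := abs_le.2 ⟨by linarith, by linarith⟩
    have h3 := abs_lt.1 ((cos_lt_iff' σ _ hσ1 hσ2 habs).1 (hγ ▸ hc))
    linarith [h3.2]

lemma volbnd {S : Set ℝ} {c σ : ℝ} (h0 : 0 < σ) (h : S ⊆ Set.Ioo c (c+σ)) :
    (volume S).toReal ≤ σ := by
  refine ENNReal.toReal_le_of_le_ofReal (le_of_lt h0) (le_trans (measure_mono h) ?_)
  rw [Real.volume_Ioo]
  exact ENNReal.ofReal_le_ofReal (by linarith)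

lemma Fcomp (σ γ t : ℝ) (hσ1 : 0 < σ) (hσ2 : σ < Real.pi) (hγ : γ = Real.cos (σ/2)) :
    (∫ θ in (-t)..(Real.pi - t),
      ((1/4) * (if Real.cos θ ≤ γ then (1:ℝ) else 0) +
       (7/4) * (if -Real.cos (θ + σ) ≤ γ then (1:ℝ) else 0)))
    = 2 * Real.pi -
      ((1/4) * (volume ({θ : ℝ | γ < Real.cos θ} ∩ Set.Ioc (-t) (Real.pi - t))).toReal
     + (7/4) * (volume ({θ : ℝ | γ < -Real.cos (θ + σ)} ∩ Set.Ioc (-t) (Real.pi - t))).toReal) := by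
  have hpi := Real.pi_pos
  have hab : -t ≤ Real.pi - t := by linarith
  have hA : MeasurableSet {θ : ℝ | Real.cos θ ≤ γ} :=
    measurableSet_le Real.continuous_cos.measurable measurable_const
  have hB : MeasurableSet {θ : ℝ | -Real.cos (θ + σ) ≤ γ} :=
    measurableSet_le ((Real.continuous_cos.comp (continuous_id.add continuous_const)).neg.measurable) measurable_const
  rw [intervalIntegral.integral_add ((intble' hA (-t) (Real.pi - t)).const_mul _) ((intble' hB (-t) (Real.pi - t)).const_mul _),
      intervalIntegral.integral_const_mul, intervalIntegral.integral_const_mul,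
      integ' hA _ _ hab, integ' hB _ _ hab,
      voltoReal _ _ hab _ hA, voltoReal _ _ hab _ hB]
  have e1 : {θ : ℝ | Real.cos θ ≤ γ}ᶜ = {θ : ℝ | γ < Real.cos θ} := by ext θ; simp [not_le]
  have e2 : {θ : ℝ | -Real.cos (θ + σ) ≤ γ}ᶜ = {θ : ℝ | γ < -Real.cos (θ + σ)} := by
    ext θ; simp [not_le]
  rw [e1, e2]; ring

theorem stmt18 (σ γ : ℝ) (hσ1 : 0 < σ) (hσ2 : σ < Real.pi)
    (hγ : γ = Real.cos (σ/2)) :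
    let F : ℝ → ℝ := fun t => ∫ θ in (-t)..(Real.pi - t),
      ((1/4) * (if Real.cos θ ≤ γ then (1:ℝ) else 0) +
       (7/4) * (if -Real.cos (θ + σ) ≤ γ then (1:ℝ) else 0))
    F (σ/2) = 2 * Real.pi - 2 * σ ∧
    ∀ t ∈ Set.Ico (0:ℝ) (2 * Real.pi), 2 * Real.pi - 2 * σ ≤ F t := by
  intro F
  have hpi := Real.pi_pos
  constructor
  · show (∫ θ in (-(σ/2))..(Real.pi - σ/2),
      ((1/4) * (if Real.cos θ ≤ γ then (1:ℝ) else 0) +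
       (7/4) * (if -Real.cos (θ + σ) ≤ γ then (1:ℝ) else 0))) = 2 * Real.pi - 2 * σ
    rw [Fcomp σ γ (σ/2) hσ1 hσ2 hγ, setA1 σ γ hσ1 hσ2 hγ, setB1 σ γ hσ1 hσ2 hγ,
      Real.volume_Ioo, Real.volume_Ioo]
    rw [show σ/2 - -(σ/2) = σ by ring, show Real.pi - σ/2 - (Real.pi - 3*σ/2) = σ by ring,
      ENNReal.toReal_ofReal (le_of_lt hσ1)]
    ring
  · rintro t ⟨ht1, ht2⟩
    show 2 * Real.pi - 2 * σ ≤ ∫ θ in (-t)..(Real.pi - t),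
      ((1/4) * (if Real.cos θ ≤ γ then (1:ℝ) else 0) +
       (7/4) * (if -Real.cos (θ + σ) ≤ γ then (1:ℝ) else 0))
    rw [Fcomp σ γ t hσ1 hσ2 hγ]
    have bA : (volume ({θ : ℝ | γ < Real.cos θ} ∩ Set.Ioc (-t) (Real.pi - t))).toReal ≤ σ := by
      rcases le_or_gt t (2*Real.pi - σ/2) with h | h
      · exact volbnd hσ1 (subA1 σ γ t hσ1 hσ2 hγ ht1 h)
      · exact volbnd hσ1 (subA2 σ γ t hσ1 hσ2 hγ h ht2)
    have bB : (volume ({θ : ℝ | γ < -Real.cos (θ + σ)} ∩ Set.Ioc (-t) (Real.pi - t))).toReal ≤ σ := by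
      rcases le_or_gt t (Real.pi + σ/2) with h | h
      · exact volbnd hσ1 (subB1 σ γ t hσ1 hσ2 hγ ht1 h)
      · exact volbnd hσ1 (subB2 σ γ t hσ1 hσ2 hγ h ht2)
    linarith
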